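/- In a √qPMV-algebra A, the set R(A) = {a ∈ A : a ⊕ 0 = a} of regular elements is closed under ⊕, •, ¬ and contains 0, ½, 1, and (R(A), ⊕, •, ¬, 0, ½, 1) is a PMV-algebra. -/
import Mathlib


/-- A quasi-MV algebra. -/
class QMV (α : Type*) where
  add : α → α → α
  neg : α → α
  zero : α
  one : α
  add_assoc : ∀ x y z : α, add x (add y z) = add (add x y) z
  neg_neg : ∀ x : α, neg (neg x) = x
  add_one : ∀ x : α, add x one = one
  luk : ∀ x y : α, add (neg (add (neg x) y)) y = add (neg (add (neg y) x)) x
  neg_add_zero : ∀ x : α, neg (add x zero) = add (neg x) zero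
  add_add_zero : ∀ x y : α, add (add x y) zero = add x y
  neg_zero : neg (zero : α) = one

namespace QMV
variable {α : Type*} [QMV α]
/-- `x ⊙ y := ¬(¬x ⊕ ¬y)` -/
def odot (x y : α) : α := neg (add (neg x) (neg y))
/-- `x ∧ y := x ⊙ (¬x ⊕ y)` -/
def inf (x y : α) : α := odot x (add (neg x) y)
/-- `x ≤ y iff ¬x ⊕ y = 1` -/
def le (x y : α) : Prop := add (neg x) y = one
end QMV

/-- A √qPMV-algebra structure on a quasi-MV algebra. -/
class SQPMV (α : Type*) [QMV α] where
  half : α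
  sqrt : α → α
  mul : α → α → α
  sqrt_neg : ∀ x : α, sqrt (QMV.neg x) = QMV.neg (sqrt x)
  sqrt_sqrt : ∀ x : α, sqrt (sqrt x) = QMV.neg x
  sqrt_add : ∀ x y : α, QMV.add (sqrt (QMV.add x y)) QMV.zero = half
  sqrt_half : sqrt half = half
  mul_comm : ∀ x y : α, mul x y = mul y x
  mul_assoc : ∀ x y z : α, mul x (mul y z) = mul (mul x y) z
  mul_one : ∀ x : α, mul x QMV.one = QMV.add x QMV.zero
  mul_reg : ∀ x y : α, mul x y = QMV.add (mul x y) QMV.zero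
  mul_distrib : ∀ x y z : α,
    mul x (QMV.odot y (QMV.neg z)) = QMV.odot (mul x y) (QMV.neg (mul x z))
  sqrt_mul : ∀ x y : α, QMV.add (sqrt (mul x y)) QMV.zero = half

/-- An MV-algebra. -/
class MV (α : Type*) where
  add : α → α → α
  neg : α → α
  zero : α
  add_assoc : ∀ x y z : α, add x (add y z) = add (add x y) z
  add_comm : ∀ x y : α, add x y = add y x
  add_zero : ∀ x : α, add x zero = x
  neg_neg : ∀ x : α, neg (neg x) = x
  add_top : ∀ x : α, add x (neg zero) = neg zero
  luk : ∀ x y : α, add (neg (add (neg x) y)) y = add (neg (add (neg y) x)) x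

namespace MV
variable {α : Type*} [MV α]
/-- `1 := ¬0` -/
def one : α := neg zero
/-- `x ⊙ y := ¬(¬x ⊕ ¬y)` -/
def odot (x y : α) : α := neg (add (neg x) (neg y))
/-- `x ∧ y := x ⊙ (¬x ⊕ y)` -/
def inf (x y : α) : α := odot x (add (neg x) y)
/-- `x ≤ y iff ¬x ⊕ y = 1` -/
def le (x y : α) : Prop := add (neg x) y = one
end MV

/-- A product MV-algebra (PMV-algebra): an MV-algebra with a commutative monoid
product (unit `1`) satisfying `x • (y ⊙ ¬z) = (x • y) ⊙ ¬(x • z)`. -/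
class PMV (α : Type*) [MV α] where
  mul : α → α → α
  mul_comm : ∀ x y : α, mul x y = mul y x
  mul_assoc : ∀ x y z : α, mul x (mul y z) = mul (mul x y) z
  mul_one : ∀ x : α, mul x MV.one = x
  mul_distrib : ∀ x y z : α,
    mul x (MV.odot y (MV.neg z)) = MV.odot (mul x y) (MV.neg (mul x z))

/-- Regular elements of a √qPMV-algebra: `a ⊕ 0 = a`. -/
def Reg {α : Type*} [QMV α] (a : α) : Prop := QMV.add a QMV.zero = a


section RegularAux

open QMV

variable {α : Type*} [QMV α]

lemma reg_add' (x y : α) : Reg (add x y) := QMV.add_add_zero x y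

lemma reg_neg' {a : α} (h : Reg a) : Reg (neg a) := by
  show add (neg a) zero = neg a
  rw [← QMV.neg_add_zero]
  show neg (add a zero) = neg a
  rw [h]

lemma neg_one' : neg (one : α) = zero := by
  rw [← QMV.neg_zero]; exact QMV.neg_neg zero

/-- `¬(0 ⊕ x) ⊕ x = 1`. -/
lemma l2 (x : α) : add (neg (add zero x)) x = one := by
  have h := QMV.luk x (one : α)
  rw [QMV.add_one (neg x), neg_one', QMV.add_one (zero : α)] at h
  exact h.symm

/-- `1 ⊕ x = 1`. -/
lemma l12 (x : α) : add one x = one := by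
  have hreg : Reg (add one x) := reg_add' one x
  have hnc : add (neg (add one x)) zero = neg (add one x) := reg_neg' hreg
  have h5 : add zero (add one x) = add one x := by
    rw [QMV.add_assoc, QMV.add_one (zero : α)]
  have h6 := l2 (add one x)
  rw [h5] at h6
  have h := QMV.luk (add one x) (zero : α)
  rw [hnc, QMV.neg_neg, hreg, QMV.neg_zero, QMV.add_assoc one one x,
    QMV.add_one (one : α), h6] at h
  exact h

/-- `0 ⊕ a = a` for regular `a`. -/
lemma l16 {a : α} (h : Reg a) : add zero a = a := by
  have hna : add (neg a) zero = neg a := reg_neg' h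
  have hl := QMV.luk a (zero : α)
  rw [hna, QMV.neg_neg, h, QMV.neg_zero, l12 a, neg_one'] at hl
  exact hl.symm

/-- `¬x ⊕ x = 1` for all `x`. -/
lemma l17 (x : α) : add (neg x) x = one := by
  have hr : Reg (add x zero) := reg_add' x zero
  have h2 := l2 (add x zero)
  rw [l16 hr, QMV.neg_add_zero] at h2
  calc add (neg x) x
      = add (add (neg x) x) zero := (QMV.add_add_zero _ _).symm
    _ = add (neg x) (add x zero) := (QMV.add_assoc _ _ _).symm
    _ = add (neg x) (add zero (add x zero)) := by rw [l16 hr]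
    _ = add (add (neg x) zero) (add x zero) := QMV.add_assoc _ _ _
    _ = one := h2

/-- `¬(x ⊕ y) ⊕ (y ⊕ x) = 1`. -/
lemma l_t (x y : α) : add (neg (add x y)) (add y x) = one := by
  have h1 := QMV.luk (neg x) y
  rw [QMV.neg_neg] at h1
  calc add (neg (add x y)) (add y x)
      = add (add (neg (add x y)) y) x := QMV.add_assoc _ _ _
    _ = add (add (neg (add (neg y) (neg x))) (neg x)) x := by rw [h1]
    _ = add (neg (add (neg y) (neg x))) (add (neg x) x) := (QMV.add_assoc _ _ _).symm
    _ = add (neg (add (neg y) (neg x))) one := by rw [l17]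
    _ = one := QMV.add_one _

/-- Commutativity of `⊕`. -/
lemma l_comm (x y : α) : add x y = add y x := by
  have h := QMV.luk (add x y) (add y x)
  rw [l_t x y, l_t y x, neg_one', l16 (reg_add' y x), l16 (reg_add' x y)] at h
  exact h.symm

lemma l_reg_zero : Reg (zero : α) := by
  have h := l2 (zero : α)
  have hrn : add (neg (add zero zero)) zero = neg (add zero zero) :=
    reg_neg' (reg_add' (zero : α) zero)
  rw [hrn] at h
  have h2 := congrArg neg h
  rw [QMV.neg_neg, neg_one'] at h2
  exact h2

lemma l_reg_one : Reg (one : α) := by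
  show add one zero = one
  rw [l_comm one zero]
  exact QMV.add_one zero

variable [SQPMV α]

lemma l_reg_half : Reg (SQPMV.half : α) := by
  have h := SQPMV.sqrt_add (zero : α) zero
  rw [← h]
  exact QMV.add_add_zero _ _

lemma l_reg_mul (a b : α) : Reg (SQPMV.mul a b) := (SQPMV.mul_reg a b).symm

/-- The MV-algebra of regular elements. -/
instance regMV : MV {a : α // Reg a} where
  add a b := ⟨add a.1 b.1, reg_add' _ _⟩
  neg a := ⟨neg a.1, reg_neg' a.2⟩
  zero := ⟨zero, l_reg_zero⟩
  add_assoc a b c := Subtype.ext (QMV.add_assoc _ _ _)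
  add_comm a b := Subtype.ext (l_comm _ _)
  add_zero a := Subtype.ext a.2
  neg_neg a := Subtype.ext (QMV.neg_neg _)
  add_top a := Subtype.ext (by
    show add a.1 (neg zero) = neg zero
    rw [QMV.neg_zero]
    exact QMV.add_one _)
  luk a b := Subtype.ext (QMV.luk _ _)

/-- The PMV-algebra of regular elements. -/
def regPMV : PMV {a : α // Reg a} where
  mul a b := ⟨SQPMV.mul a.1 b.1, l_reg_mul _ _⟩
  mul_comm a b := Subtype.ext (SQPMV.mul_comm _ _)
  mul_assoc a b c := Subtype.ext (SQPMV.mul_assoc _ _ _)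
  mul_one a := Subtype.ext (by
    show SQPMV.mul a.1 (neg zero) = a.1
    rw [QMV.neg_zero, SQPMV.mul_one]
    exact a.2)
  mul_distrib a b c := Subtype.ext (SQPMV.mul_distrib a.1 b.1 c.1)

end RegularAux

/-- The regular elements of a √qPMV-algebra are closed under `⊕, •, ¬`, contain
`0, ½, 1`, and form a PMV-algebra under the restricted operations. -/
theorem sqpmv_regular_pmv {α : Type*} [QMV α] [SQPMV α] :
    (∀ a b : α, Reg a → Reg b → Reg (QMV.add a b)) ∧
    (∀ a b : α, Reg a → Reg b → Reg (SQPMV.mul a b)) ∧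
    (∀ a : α, Reg a → Reg (QMV.neg a)) ∧
    Reg (QMV.zero : α) ∧ Reg (SQPMV.half : α) ∧ Reg (QMV.one : α) ∧
    ∃ (im : MV {a : α // Reg a}) (ip : @PMV {a : α // Reg a} im),
      (∀ a b : {a : α // Reg a}, (im.add a b).val = QMV.add a.val b.val) ∧
      (∀ a : {a : α // Reg a}, (im.neg a).val = QMV.neg a.val) ∧
      im.zero.val = (QMV.zero : α) ∧
      (@MV.one _ im).val = (QMV.one : α) ∧
      (∀ a b : {a : α // Reg a}, (ip.mul a b).val = SQPMV.mul a.val b.val) := by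
  refine ⟨fun a b _ _ => reg_add' a b, fun a b _ _ => l_reg_mul a b,
    fun a ha => reg_neg' ha, l_reg_zero, l_reg_half, l_reg_one,
    regMV, regPMV, fun a b => rfl, fun a => rfl, rfl, ?_, fun a b => rfl⟩
  show QMV.neg QMV.zero = QMV.one
  exact QMV.neg_zero
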